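/- Let α ∈ (0,1), let u : ℝ^d → ℝ be differentiable at x_0 ∈ ℝ^d, and let k be a nonnegative integer. Then for every x ∈ B_{2^{−k}}(x_0), |u(x) − u(x_0) − ∇u(x_0)·(x − x_0)| ≤ 2^{−α} Σ_{i=k}^∞ 2^{i−k−iα} [u]_{Λ^α(B_{2^{−i}}(x_0))}, the inequality being understood in [0,∞]. -/

import Mathlib

open MeasureTheory Metric Filter Set
open scoped ENNReal Topology

noncomputable section

/-- Hölder seminorm `[u]_{γ;Ω}` (valued in `ℝ≥0∞`). -/
def holderSemi {E F : Type*} [NormedAddCommGroup E] [NormedAddCommGroup F]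
    (γ : ℝ) (Ω : Set E) (u : E → F) : ℝ≥0∞ :=
  ⨆ (x : E) (_ : x ∈ Ω) (y : E) (_ : y ∈ Ω) (_ : x ≠ y),
    ENNReal.ofReal (‖u x - u y‖ / ‖x - y‖ ^ γ)

/-- Zygmund seminorm `[u]_{Λ^α(Ω)}` (valued in `ℝ≥0∞`). -/
def zygmundSemi {E : Type*} [NormedAddCommGroup E] (α : ℝ) (Ω : Set E) (u : E → ℝ) : ℝ≥0∞ :=
  ⨆ (x : E) (h : E) (_ : h ≠ 0) (_ : x ∈ Ω) (_ : x + h ∈ Ω) (_ : x - h ∈ Ω),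
    ENNReal.ofReal (|u (x + h) + u (x - h) - 2 * u x| / ‖h‖ ^ α)

/-- The `L_∞` norm of `u` on `Ω` (valued in `ℝ≥0∞`). -/
def eSupNorm {E : Type*} (Ω : Set E) (u : E → ℝ) : ℝ≥0∞ :=
  ⨆ (x : E) (_ : x ∈ Ω), ENNReal.ofReal |u x|

/-- A Dini function: nonnegative, nondecreasing on `(0,∞)`, with `∫_0^1 ω(r)/r dr < ∞`. -/
def IsDini (ω : ℝ → ℝ) : Prop :=
  (∀ r, 0 < r → 0 ≤ ω r) ∧ MonotoneOn ω (Set.Ioi (0:ℝ)) ∧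
    IntegrableOn (fun r => ω r / r) (Set.Ioc (0:ℝ) 1)

/-- Second differences are bounded by the Zygmund seminorm. -/
lemma le_zygmundSemi {E : Type*} [NormedAddCommGroup E] (α : ℝ) (Ω : Set E) (u : E → ℝ)
    (x h : E) (h0 : h ≠ 0) (h1 : x ∈ Ω) (h2 : x + h ∈ Ω) (h3 : x - h ∈ Ω) :
    ENNReal.ofReal (|u (x + h) + u (x - h) - 2 * u x| / ‖h‖ ^ α) ≤ zygmundSemi α Ω u :=
  le_iSup_of_le x <| le_iSup_of_le h <| le_iSup_of_le h0 <| le_iSup_of_le h1 <|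
    le_iSup_of_le h2 <| le_iSup_of_le h3 le_rfl

/-- Pointwise Taylor remainder estimate via a series of Zygmund seminorms. -/
theorem taylor_remainder_zygmund_series
    (d : ℕ) (hd : 1 ≤ d) (α : ℝ) (hα : α ∈ Set.Ioo (0:ℝ) 1)
    (u : EuclideanSpace ℝ (Fin d) → ℝ) (x0 : EuclideanSpace ℝ (Fin d))
    (hdiff : DifferentiableAt ℝ u x0) (k : ℕ) :
    ∀ x ∈ ball x0 ((2:ℝ) ^ (-(k:ℝ))),
      ENNReal.ofReal |u x - u x0 - (inner ℝ (gradient u x0) (x - x0) : ℝ)| ≤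
        ENNReal.ofReal ((2:ℝ) ^ (-α)) *
          ∑' m : ℕ, ENNReal.ofReal ((2:ℝ) ^ ((m:ℝ) - ((m:ℝ) + (k:ℝ)) * α)) *
            zygmundSemi α (ball x0 ((2:ℝ) ^ (-((m:ℝ) + (k:ℝ))))) u := by
  obtain ⟨hα0, hα1⟩ := hα
  intro x hx
  by_cases hxx : x = x0
  · simp [hxx]
  set h : EuclideanSpace ℝ (Fin d) := x - x0 with hh
  have hne : h ≠ 0 := sub_ne_zero.2 hxx
  have hnorm : ‖h‖ < (2:ℝ) ^ (-(k:ℝ)) := by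
    rw [mem_ball, dist_eq_norm] at hx; exact hx
  have hnormpos : (0:ℝ) < ‖h‖ := norm_pos_iff.2 hne
  set c : ℝ := inner ℝ (gradient u x0) h with hc
  set g : ℝ → ℝ := fun t => u (x0 + t • h) - u x0 - t * c with hgdef
  -- the remainder is `g 1`
  have hg1 : u x - u x0 - (inner ℝ (gradient u x0) (x - x0) : ℝ) = g 1 := by
    simp only [hgdef, one_smul, one_mul, ← hh, ← hc]
    rw [add_sub_cancel]
  -- little-o property of g at 0
  have hlo : g =o[𝓝 (0:ℝ)] fun t : ℝ => t := by
    have h1 : (fun v => u (x0 + v) - u x0 - (inner ℝ (gradient u x0) v : ℝ)) =o[𝓝 0]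
        fun v => v := hasGradientAt_iff_isLittleO_nhds_zero.1 hdiff.hasGradientAt
    have h2 : Tendsto (fun t : ℝ => t • h) (𝓝 0) (𝓝 0) := by
      have : Continuous (fun t : ℝ => t • h) := continuous_id.smul continuous_const
      simpa using this.tendsto 0
    have h3 := h1.comp_tendsto h2
    have h4 : (fun t : ℝ => t • h) =O[𝓝 (0:ℝ)] fun t : ℝ => t := by
      apply Asymptotics.isBigO_of_le' (c := ‖h‖)
      intro t
      simp [norm_smul, mul_comm]
    have h5 := h3.trans_isBigO h4
    have : g = fun t : ℝ => u (x0 + t • h) - u x0 - (inner ℝ (gradient u x0) (t • h) : ℝ) := by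
      funext t
      show u (x0 + t • h) - u x0 - t * c = u (x0 + t • h) - u x0 - inner ℝ (gradient u x0) (t • h)
      rw [real_inner_smul_right, hc]
    rw [this]
    exact h5
  -- the tail term tends to 0
  have htail : Tendsto (fun n : ℕ => ENNReal.ofReal |(2:ℝ) ^ n * g (((2:ℝ) ^ n)⁻¹)|)
      atTop (𝓝 0) := by
    have h1 : Tendsto (fun n : ℕ => ((2:ℝ) ^ n)⁻¹) atTop (𝓝 0) := by
      simpa [inv_pow] using
        tendsto_pow_atTop_nhds_zero_of_lt_one (by norm_num : (0:ℝ) ≤ 2⁻¹) (by norm_num)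
    have h2 := (hlo.tendsto_div_nhds_zero).comp h1
    have h3 : Tendsto (fun n : ℕ => |(2:ℝ) ^ n * g (((2:ℝ) ^ n)⁻¹)|) atTop (𝓝 0) := by
      have := h2.abs
      simp only [Function.comp, div_eq_mul_inv, inv_inv, abs_zero] at this
      simpa [mul_comm] using this
    simpa using (ENNReal.tendsto_ofReal h3)
  -- telescoping identity
  have tel : ∀ n : ℕ, g 1 =
      (∑ j ∈ Finset.range n, (2:ℝ) ^ j * (g (((2:ℝ) ^ j)⁻¹) - 2 * g (((2:ℝ) ^ (j + 1))⁻¹)))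
        + (2:ℝ) ^ n * g (((2:ℝ) ^ n)⁻¹) := by
    intro n
    induction n with
    | zero => simp
    | succ n ih =>
      rw [Finset.sum_range_succ]
      rw [ih]
      ring
  -- per-term estimate
  have key : ∀ j : ℕ,
      ENNReal.ofReal |(2:ℝ) ^ j * (g (((2:ℝ) ^ j)⁻¹) - 2 * g (((2:ℝ) ^ (j + 1))⁻¹))| ≤
        ENNReal.ofReal ((2:ℝ) ^ (-α)) *
          (ENNReal.ofReal ((2:ℝ) ^ ((j:ℝ) - ((j:ℝ) + (k:ℝ)) * α)) *
            zygmundSemi α (ball x0 ((2:ℝ) ^ (-((j:ℝ) + (k:ℝ))))) u) := by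
    intro j
    set r : ℝ := (2:ℝ) ^ (-((j:ℝ) + (k:ℝ))) with hrdef
    set t : ℝ := ((2:ℝ) ^ (j + 1))⁻¹ with htdef
    have htpos : (0:ℝ) < t := by positivity
    set y : EuclideanSpace ℝ (Fin d) := x0 + t • h with hydef
    set w : EuclideanSpace ℝ (Fin d) := t • h with hwdef
    have hw0 : w ≠ 0 := smul_ne_zero htpos.ne' hne
    have ht2 : t + t = ((2:ℝ) ^ j)⁻¹ := by
      rw [htdef, pow_succ]
      field_simp
      ring
    have e1 : y + w = x0 + ((2:ℝ) ^ j)⁻¹ • h := by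
      rw [hydef, hwdef, add_assoc, ← add_smul, ht2]
    have e2 : y - w = x0 := by
      rw [hydef, hwdef, add_sub_cancel_right]
    have hpj : ((2:ℝ) ^ j)⁻¹ = (2:ℝ) ^ (-(j:ℝ)) := by
      rw [← Real.rpow_natCast 2 j, ← Real.rpow_neg (by norm_num)]
    have hr0 : (2:ℝ) ^ (-(j:ℝ)) * (2:ℝ) ^ (-(k:ℝ)) = r := by
      rw [hrdef, ← Real.rpow_add (by norm_num)]
      congr 1
      ring
    have hmem : ∀ a : ℝ, 0 ≤ a → a ≤ ((2:ℝ) ^ j)⁻¹ → x0 + a • h ∈ ball x0 r := by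
      intro a ha0 ha
      rw [mem_ball, dist_eq_norm]
      have : x0 + a • h - x0 = a • h := by abel
      rw [this, norm_smul, Real.norm_eq_abs, abs_of_nonneg ha0]
      calc a * ‖h‖ ≤ ((2:ℝ) ^ j)⁻¹ * ‖h‖ := by gcongr
        _ < ((2:ℝ) ^ j)⁻¹ * (2:ℝ) ^ (-(k:ℝ)) := by
            apply mul_lt_mul_of_pos_left hnorm (by positivity)
        _ = r := by rw [hpj, hr0]
    have htj : t ≤ ((2:ℝ) ^ j)⁻¹ := by
      rw [htdef]
      gcongr
      · norm_num
      · omega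
    have hy : y ∈ ball x0 r := hmem t htpos.le htj
    have hyp : y + w ∈ ball x0 r := by
      rw [e1]; exact hmem _ (by positivity) le_rfl
    have hym : y - w ∈ ball x0 r := by
      rw [e2]
      exact mem_ball_self (by positivity)
    -- second difference equals the telescoping term
    have hD : g (((2:ℝ) ^ j)⁻¹) - 2 * g (((2:ℝ) ^ (j + 1))⁻¹) =
        u (y + w) + u (y - w) - 2 * u y := by
      rw [e1, e2]
      simp only [hgdef, hydef, ← htdef]
      have : ((2:ℝ) ^ j)⁻¹ = t + t := ht2.symm
      rw [this]
      ring
    have hZ := le_zygmundSemi α (ball x0 r) u y w hw0 hy hyp hym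
    have hwα : (0:ℝ) < ‖w‖ ^ α := Real.rpow_pos_of_pos (norm_pos_iff.2 hw0) α
    have habs : ENNReal.ofReal |u (y + w) + u (y - w) - 2 * u y| ≤
        zygmundSemi α (ball x0 r) u * ENNReal.ofReal (‖w‖ ^ α) := by
      have heq : ENNReal.ofReal |u (y + w) + u (y - w) - 2 * u y| =
          ENNReal.ofReal (|u (y + w) + u (y - w) - 2 * u y| / ‖w‖ ^ α) *
            ENNReal.ofReal (‖w‖ ^ α) := by
        rw [← ENNReal.ofReal_mul (by positivity), div_mul_cancel₀ _ hwα.ne']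
      rw [heq]
      exact mul_le_mul_left hZ _
    -- bound on ‖w‖ ^ α
    have hwlt : ‖w‖ < (2:ℝ) ^ (-((j:ℝ) + 1) - (k:ℝ)) := by
      rw [hwdef, norm_smul, Real.norm_eq_abs, abs_of_pos htpos]
      have h1 : t = (2:ℝ) ^ (-((j:ℝ) + 1)) := by
        rw [htdef, ← Real.rpow_natCast 2 (j + 1), ← Real.rpow_neg (by norm_num)]
        push_cast
        try ring_nf
      calc t * ‖h‖ < t * (2:ℝ) ^ (-(k:ℝ)) := by
            exact mul_lt_mul_of_pos_left hnorm htpos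
        _ = (2:ℝ) ^ (-((j:ℝ) + 1) - (k:ℝ)) := by
            rw [h1, ← Real.rpow_add (by norm_num)]
            try congr 1
            try ring
    have hwαle : ‖w‖ ^ α ≤ (2:ℝ) ^ ((-((j:ℝ) + 1) - (k:ℝ)) * α) := by
      rw [Real.rpow_mul (by norm_num)]
      exact Real.rpow_le_rpow (norm_nonneg _) hwlt.le hα0.le
    -- final combination
    have habs2 : |(2:ℝ) ^ j * (g (((2:ℝ) ^ j)⁻¹) - 2 * g (((2:ℝ) ^ (j + 1))⁻¹))| =
        (2:ℝ) ^ j * |u (y + w) + u (y - w) - 2 * u y| := by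
      rw [abs_mul, hD, abs_of_pos (by positivity : (0:ℝ) < (2:ℝ) ^ j)]
    rw [habs2, ENNReal.ofReal_mul (by positivity)]
    calc ENNReal.ofReal ((2:ℝ) ^ j) * ENNReal.ofReal |u (y + w) + u (y - w) - 2 * u y|
        ≤ ENNReal.ofReal ((2:ℝ) ^ j) *
            (zygmundSemi α (ball x0 r) u * ENNReal.ofReal (‖w‖ ^ α)) :=
          mul_le_mul_right habs _
      _ = ENNReal.ofReal ((2:ℝ) ^ j) * ENNReal.ofReal (‖w‖ ^ α) *
            zygmundSemi α (ball x0 r) u := by ring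
      _ ≤ ENNReal.ofReal ((2:ℝ) ^ j) *
            ENNReal.ofReal ((2:ℝ) ^ ((-((j:ℝ) + 1) - (k:ℝ)) * α)) *
            zygmundSemi α (ball x0 r) u :=
          mul_le_mul_left (mul_le_mul_right (ENNReal.ofReal_le_ofReal hwαle) _) _
      _ = ENNReal.ofReal ((2:ℝ) ^ (-α)) *
            (ENNReal.ofReal ((2:ℝ) ^ ((j:ℝ) - ((j:ℝ) + (k:ℝ)) * α)) *
              zygmundSemi α (ball x0 r) u) := by
          rw [← ENNReal.ofReal_mul (by positivity), ← mul_assoc,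
            ← ENNReal.ofReal_mul (by positivity)]
          congr 2
          rw [← Real.rpow_natCast 2 j, ← Real.rpow_add (by norm_num),
            ← Real.rpow_add (by norm_num)]
          congr 1
          ring
  -- assemble
  rw [hg1]
  set S : ℝ≥0∞ := ENNReal.ofReal ((2:ℝ) ^ (-α)) *
    ∑' m : ℕ, ENNReal.ofReal ((2:ℝ) ^ ((m:ℝ) - ((m:ℝ) + (k:ℝ)) * α)) *
      zygmundSemi α (ball x0 ((2:ℝ) ^ (-((m:ℝ) + (k:ℝ))))) u with hSdef
  have main : ∀ n : ℕ, ENNReal.ofReal |g 1| ≤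
      S + ENNReal.ofReal |(2:ℝ) ^ n * g (((2:ℝ) ^ n)⁻¹)| := by
    intro n
    calc ENNReal.ofReal |g 1|
        ≤ ENNReal.ofReal
            ((∑ j ∈ Finset.range n,
              |(2:ℝ) ^ j * (g (((2:ℝ) ^ j)⁻¹) - 2 * g (((2:ℝ) ^ (j + 1))⁻¹))|)
              + |(2:ℝ) ^ n * g (((2:ℝ) ^ n)⁻¹)|) := by
          apply ENNReal.ofReal_le_ofReal
          rw [tel n]
          refine (abs_add_le _ _).trans ?_
          gcongr
          exact Finset.abs_sum_le_sum_abs _ _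
      _ = (∑ j ∈ Finset.range n,
            ENNReal.ofReal |(2:ℝ) ^ j * (g (((2:ℝ) ^ j)⁻¹) - 2 * g (((2:ℝ) ^ (j + 1))⁻¹))|)
            + ENNReal.ofReal |(2:ℝ) ^ n * g (((2:ℝ) ^ n)⁻¹)| := by
          rw [ENNReal.ofReal_add (Finset.sum_nonneg fun _ _ => abs_nonneg _) (abs_nonneg _),
            ENNReal.ofReal_sum_of_nonneg (fun _ _ => abs_nonneg _)]
      _ ≤ (∑ j ∈ Finset.range n,
            ENNReal.ofReal ((2:ℝ) ^ (-α)) *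
              (ENNReal.ofReal ((2:ℝ) ^ ((j:ℝ) - ((j:ℝ) + (k:ℝ)) * α)) *
                zygmundSemi α (ball x0 ((2:ℝ) ^ (-((j:ℝ) + (k:ℝ))))) u))
            + ENNReal.ofReal |(2:ℝ) ^ n * g (((2:ℝ) ^ n)⁻¹)| := by
          gcongr with j hj
          exact key j
      _ ≤ S + ENNReal.ofReal |(2:ℝ) ^ n * g (((2:ℝ) ^ n)⁻¹)| := by
          gcongr
          rw [hSdef, ← Finset.mul_sum]
          exact mul_le_mul_right (ENNReal.sum_le_tsum _) _
  have htend : Tendsto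
      (fun n : ℕ => S + ENNReal.ofReal |(2:ℝ) ^ n * g (((2:ℝ) ^ n)⁻¹)|) atTop (𝓝 S) := by
    simpa using (tendsto_const_nhds (x := S) (f := atTop)).add htail
  exact ge_of_tendsto' htend main
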